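/- Let χ ≥ 0 and let X₁,…,X_P be i.i.d. samples from the density p. Then there exist constants 0 < c ≤ C and P₀ such that for all P ≥ P₀, c · P^{−1/(χ+1)} ≤ E[ min_{1 ≤ i ≤ P} |X_i| ] ≤ C · P^{−1/(χ+1)}. -/

import Mathlib

open MeasureTheory ProbabilityTheory Real

/-- The data density `p(x) = |x|^χ e^{-x²} / Γ((1+χ)/2)`. -/
noncomputable def dataDensity (χ : ℝ) (x : ℝ) : ℝ :=
  |x| ^ χ * Real.exp (-x ^ 2) / Real.Gamma ((1 + χ) / 2)

lemma lint_exp (s : ℝ) {b : ℝ} (hb : 0 < b) :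
    ∫⁻ x in Set.Ioi s, ENNReal.ofReal (Real.exp (-(b * x)))
      = ENNReal.ofReal (Real.exp (-(b * s)) / b) := by
  have hint : IntegrableOn (fun x => Real.exp (-(b * x))) (Set.Ioi s) := by
    simpa [neg_mul] using exp_neg_integrableOn_Ioi s hb
  have hreal : ∫ x in Set.Ioi s, Real.exp (-(b * x)) = Real.exp (-(b * s)) / b := by
    have hderiv : ∀ x ∈ Set.Ici s,
        HasDerivAt (fun y => -(Real.exp (-(b * y)) / b)) (Real.exp (-(b * x))) x := by
      intro x _
      have h1 : HasDerivAt (fun y : ℝ => -(b * y)) (-b) x := by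
        simpa using ((hasDerivAt_id x).const_mul b).fun_neg
      have h3 := (h1.exp.div_const b).fun_neg
      refine h3.congr_deriv ?_
      rw [eq_comm, mul_neg, neg_div, neg_neg, mul_div_assoc, div_self hb.ne', mul_one]
    have htend : Filter.Tendsto (fun y => -(Real.exp (-(b * y)) / b)) Filter.atTop (nhds 0) := by
      have h1 : Filter.Tendsto (fun y : ℝ => -(b * y)) Filter.atTop Filter.atBot := by
        exact (Filter.tendsto_neg_atTop_atBot).comp (Filter.Tendsto.const_mul_atTop hb Filter.tendsto_id)
      have h2 := ((Real.tendsto_exp_atBot.comp h1).div_const b).neg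
      simpa using h2
    have := integral_Ioi_of_hasDerivAt_of_tendsto' hderiv hint htend
    rw [this]; ring
  rw [← ofReal_integral_eq_lintegral_ofReal hint
    (Filter.Eventually.of_forall fun x => (Real.exp_pos _).le), hreal]

lemma one_sub_ofReal_le_exp {s : ℝ} (hs : 0 ≤ s) :
    (1 : ENNReal) - ENNReal.ofReal s ≤ ENNReal.ofReal (Real.exp (-s)) := by
  rcases le_or_gt s 1 with h | h
  · have : (1 : ENNReal) - ENNReal.ofReal s ≤ ENNReal.ofReal (1 - s) := by
      rw [← ENNReal.ofReal_one, ← ENNReal.ofReal_sub _ hs]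
    exact this.trans (ENNReal.ofReal_le_ofReal (by linarith [Real.add_one_le_exp (-s)]))
  · have : ENNReal.ofReal s ≥ 1 := by
      rw [← ENNReal.ofReal_one]; exact ENNReal.ofReal_le_ofReal h.le
    simp [tsub_eq_zero_of_le this]

lemma ofReal_one_sub_le_sub {s : ℝ} (hs0 : 0 ≤ s) (hs1 : s ≤ 1) :
    ENNReal.ofReal (1 - s) ≤ (1 : ENNReal) - ENNReal.ofReal s := by
  rw [← ENNReal.ofReal_one, ← ENNReal.ofReal_sub _ hs0]

lemma exp_neg_two_le_one_sub {u : ℝ} (hu0 : 0 ≤ u) (hu : u ≤ 1/2) :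
    Real.exp (-(2*u)) ≤ 1 - u := by
  have h1 : Real.exp (-(2*u)) ≤ 1 / (1 + 2*u) := by
    rw [one_div, Real.exp_neg]
    exact inv_anti₀ (by linarith) (by linarith [Real.add_one_le_exp (2*u)])
  have h2 : 1 / (1 + 2*u) ≤ 1 - u := by
    rw [div_le_iff₀ (by linarith)]
    nlinarith
  linarith

lemma lint_exp_rpow {lam q : ℝ} (hlam : 0 < lam) (hq : 1 ≤ q) :
    ∫⁻ t in Set.Ioi (0:ℝ), ENNReal.ofReal (Real.exp (-(lam * t ^ q)))
      ≤ ENNReal.ofReal (2 * lam ^ (-(1/q))) := by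
  have hq0 : 0 < q := lt_of_lt_of_le one_pos hq
  set T := lam ^ (-(1/q)) with hT_def
  have hT : 0 < T := Real.rpow_pos_of_pos hlam _
  have hTq : T ^ q = lam⁻¹ := by
    rw [hT_def, ← Real.rpow_mul hlam.le]
    rw [show -(1/q) * q = -1 by field_simp, Real.rpow_neg_one]
  have hsplit : Set.Ioi (0:ℝ) = Set.Ioc 0 T ∪ Set.Ioi T := (Set.Ioc_union_Ioi_eq_Ioi hT.le).symm
  rw [hsplit, lintegral_union measurableSet_Ioi (Set.Ioc_disjoint_Ioi le_rfl)]
  have h1 : ∫⁻ t in Set.Ioc (0:ℝ) T, ENNReal.ofReal (Real.exp (-(lam * t ^ q)))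
      ≤ ENNReal.ofReal T := by
    calc ∫⁻ t in Set.Ioc (0:ℝ) T, ENNReal.ofReal (Real.exp (-(lam * t ^ q)))
        ≤ ∫⁻ _ in Set.Ioc (0:ℝ) T, 1 := by
          refine setLIntegral_mono measurable_const fun x hx => ?_
          rw [show (1:ENNReal) = ENNReal.ofReal 1 by simp]
          refine ENNReal.ofReal_le_ofReal (Real.exp_le_one_iff.2 ?_)
          have hx0 : 0 < x := hx.1
          have : 0 ≤ lam * x ^ q := by positivity
          · linarith
      _ = ENNReal.ofReal T := by
          rw [setLIntegral_one, Real.volume_Ioc, sub_zero]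
  have h2 : ∫⁻ t in Set.Ioi T, ENNReal.ofReal (Real.exp (-(lam * t ^ q)))
      ≤ ENNReal.ofReal T := by
    have hb : (0:ℝ) < 1/T := by positivity
    calc ∫⁻ t in Set.Ioi T, ENNReal.ofReal (Real.exp (-(lam * t ^ q)))
        ≤ ∫⁻ t in Set.Ioi T, ENNReal.ofReal (Real.exp (-(1/T * t))) := by
          refine setLIntegral_mono ?_ fun x hx => ?_
          · exact (ENNReal.measurable_ofReal.comp
              (Real.measurable_exp.comp (measurable_const.mul measurable_id).neg))
          · have hx' : T < x := hx
            refine ENNReal.ofReal_le_ofReal (Real.exp_le_exp.2 (neg_le_neg ?_))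
            have h3 : lam * x ^ q = (x / T) ^ q := by
              rw [Real.div_rpow (le_trans hT.le hx'.le) hT.le, hTq]
              field_simp
            have h4 : (1:ℝ) ≤ x / T := (one_le_div hT).2 hx'.le
            have h5 : (x/T) ^ (1:ℝ) ≤ (x/T) ^ q := Real.rpow_le_rpow_of_exponent_le h4 hq
            rw [Real.rpow_one] at h5
            rw [h3]
            calc 1/T * x = x / T := by ring
              _ ≤ (x/T) ^ q := h5
      _ = ENNReal.ofReal (Real.exp (-(1/T * T)) / (1/T)) := lint_exp T hb
      _ ≤ ENNReal.ofReal T := by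
          refine ENNReal.ofReal_le_ofReal ?_
          rw [one_div, inv_mul_cancel₀ hT.ne', div_eq_mul_inv, inv_inv]
          nlinarith [Real.exp_le_one_iff.2 (by norm_num : (-1:ℝ) ≤ 0), Real.exp_pos (-1:ℝ)]
  calc _ ≤ ENNReal.ofReal T + ENNReal.ofReal T := add_le_add h1 h2
    _ = ENNReal.ofReal (2 * T) := by rw [← ENNReal.ofReal_add hT.le hT.le]; ring_nf

lemma lt_iInf_iff' {P : ℕ} (hP : 0 < P) (g : Fin P → ℝ) (t : ℝ) :
    t < (⨅ i, g i) ↔ ∀ i, t < g i := by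
  haveI : Nonempty (Fin P) := ⟨⟨0, hP⟩⟩
  rw [iInf, Set.Finite.lt_csInf_iff (Set.finite_range g) (Set.range_nonempty g)]
  simp


set_option maxHeartbeats 1000000 in
/-- For i.i.d. samples `X₁, …, X_P` from the density `p`, the expected
minimal distance of a sample to the origin scales as `P^{-1/(χ+1)}`. -/
theorem expected_min_distance_scaling
    {Ω : Type*} [MeasureSpace Ω] [IsProbabilityMeasure (ℙ : Measure Ω)]
    (χ : ℝ) (hχ : 0 ≤ χ)
    (X : ℕ → Ω → ℝ)
    (hmeas : ∀ i, Measurable (X i))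
    (hindep : iIndepFun X ℙ)
    (hlaw : ∀ i, Measure.map (X i) ℙ
      = volume.withDensity (fun x => ENNReal.ofReal (dataDensity χ x))) :
    ∃ c C : ℝ, 0 < c ∧ c ≤ C ∧ ∃ P₀ : ℕ, 1 ≤ P₀ ∧ ∀ P : ℕ, P₀ ≤ P →
      c * (P : ℝ) ^ (-(1 / (χ + 1)))
          ≤ (∫ ω, (⨅ i : Fin P, |X i ω|) ∂ℙ) ∧
      (∫ ω, (⨅ i : Fin P, |X i ω|) ∂ℙ)
          ≤ C * (P : ℝ) ^ (-(1 / (χ + 1))) := by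
  set Γv := Real.Gamma ((1 + χ) / 2) with hΓ_def
  have hΓ : 0 < Γv := Real.Gamma_pos_of_pos (by linarith)
  set q := χ + 1 with hq_def
  have hq1 : (1:ℝ) ≤ q := by simp [hq_def]; linarith
  have hq0 : (0:ℝ) < q := lt_of_lt_of_le one_pos hq1
  set μ := volume.withDensity (fun x => ENNReal.ofReal (dataDensity χ x)) with hμ_def
  haveI hPμ : IsProbabilityMeasure μ := by
    rw [← hlaw 0]; exact Measure.isProbabilityMeasure_map (hmeas 0).aemeasurable
  have hdm : Measurable (fun x : ℝ => ENNReal.ofReal (dataDensity χ x)) := by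
    apply ENNReal.measurable_ofReal.comp
    apply Measurable.div_const
    exact (((Real.continuous_rpow_const hχ).comp continuous_abs).mul
      (Real.continuous_exp.comp (continuous_pow 2).neg)).measurable
  set G : ℝ → ENNReal := fun t => μ {x : ℝ | t < |x|} with hG_def
  have hsetm : ∀ t : ℝ, MeasurableSet {x : ℝ | t < |x|} := fun t =>
    measurableSet_lt measurable_const measurable_abs
  have hsetm' : ∀ t : ℝ, MeasurableSet {x : ℝ | |x| ≤ t} := fun t =>
    measurableSet_le measurable_abs measurable_const
  have hGanti : Antitone G := fun s t hst =>
    measure_mono (fun x hx => lt_of_le_of_lt hst hx)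
  have hGF : ∀ t : ℝ, G t = 1 - μ {x : ℝ | |x| ≤ t} := by
    intro t
    have : {x : ℝ | t < |x|} = {x : ℝ | |x| ≤ t}ᶜ := by
      ext x; simp [not_le]
    rw [hG_def]; simp only [this]
    rw [prob_compl_eq_one_sub (hsetm' t)]
  -- constants
  set a := Real.exp (-1) / ((2:ℝ) ^ q * Γv) with ha_def
  have h2q : (0:ℝ) < (2:ℝ) ^ q := Real.rpow_pos_of_pos two_pos q
  have ha : 0 < a := by positivity
  set b := 2 / Γv with hb_def
  have hb : 0 < b := by positivity
  set K := 2 * Real.exp ((χ + 1) ^ 2 / 4) / Γv with hK_def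
  have hK : 0 < K := by positivity
  -- upper bound for F
  have hFup : ∀ t : ℝ, 0 < t → μ {x : ℝ | |x| ≤ t} ≤ ENNReal.ofReal (b * t ^ q) := by
    intro t ht
    have hseteq : {x : ℝ | |x| ≤ t} = Set.Icc (-t) t := by ext x; simp [abs_le]
    rw [hμ_def, hseteq, withDensity_apply _ measurableSet_Icc]
    calc ∫⁻ x in Set.Icc (-t) t, ENNReal.ofReal (dataDensity χ x)
        ≤ ∫⁻ _ in Set.Icc (-t) t, ENNReal.ofReal (t ^ χ / Γv) := by
          refine setLIntegral_mono measurable_const fun x hx => ?_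
          refine ENNReal.ofReal_le_ofReal ?_
          have h1 : |x| ^ χ ≤ t ^ χ := Real.rpow_le_rpow (abs_nonneg x) (abs_le.2 ⟨hx.1, hx.2⟩) hχ
          have h2 : Real.exp (-x ^ 2) ≤ 1 := Real.exp_le_one_iff.2 (by nlinarith [sq_nonneg x])
          have h3 : (0:ℝ) ≤ |x| ^ χ := Real.rpow_nonneg (abs_nonneg x) χ
          have h4 : (0:ℝ) < Real.exp (-x ^ 2) := Real.exp_pos _
          unfold dataDensity
          rw [← hΓ_def, div_le_div_iff₀ hΓ hΓ]
          nlinarith [mul_le_mul_of_nonneg_left h2 h3, mul_le_mul_of_nonneg_right h1 hΓ.le,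
            mul_le_mul_of_nonneg_right (mul_le_mul_of_nonneg_left h2 h3) hΓ.le]
      _ = ENNReal.ofReal (t ^ χ / Γv) * volume (Set.Icc (-t) t) := setLIntegral_const _ _
      _ ≤ ENNReal.ofReal (b * t ^ q) := by
          rw [Real.volume_Icc, ← ENNReal.ofReal_mul (div_nonneg (Real.rpow_nonneg ht.le χ) hΓ.le)]
          refine ENNReal.ofReal_le_ofReal (le_of_eq ?_)
          rw [hb_def, hq_def, Real.rpow_add_one ht.ne']
          field_simp
          ring
  -- lower bound for F
  have hFlo : ∀ t : ℝ, 0 < t → t ≤ 1 → ENNReal.ofReal (a * t ^ q) ≤ μ {x : ℝ | |x| ≤ t} := by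
    intro t ht ht1
    have ht2 : (0:ℝ) < t / 2 := by linarith
    have hsub : Set.Icc (t/2) t ⊆ {x : ℝ | |x| ≤ t} := by
      intro x hx
      have h0 : (0:ℝ) ≤ x := le_trans ht2.le hx.1
      simp only [Set.mem_setOf_eq, abs_of_nonneg h0]
      exact hx.2
    have heq : ENNReal.ofReal (a * t ^ q)
        = ENNReal.ofReal ((t/2) ^ χ * Real.exp (-1) / Γv) * volume (Set.Icc (t/2) t) := by
      rw [Real.volume_Icc,
        ← ENNReal.ofReal_mul (by positivity)]
      congr 1
      have h3 : (t/2) ^ q = (t/2) ^ χ * (t/2) := by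
        rw [hq_def, Real.rpow_add_one ht2.ne']
      have h4 : (t/2) ^ q = t ^ q / (2:ℝ) ^ q := Real.div_rpow ht.le (by norm_num) q
      have h5 : t - t/2 = t/2 := by ring
      rw [h5, ha_def]
      rw [div_mul_eq_mul_div, div_mul_eq_mul_div, mul_comm ((t/2:ℝ) ^ χ) (Real.exp (-1))]
      rw [mul_assoc (Real.exp (-1)) _ _, ← h3, h4]
      field_simp
    rw [heq, ← setLIntegral_const]
    refine le_trans (setLIntegral_mono hdm fun x hx => ?_)
      (le_trans (lintegral_mono_set hsub) ?_)
    · refine ENNReal.ofReal_le_ofReal ?_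
      have hx0 : (0:ℝ) < x := lt_of_lt_of_le ht2 hx.1
      have h1 : (t/2) ^ χ ≤ |x| ^ χ := by
        rw [abs_of_pos hx0]
        exact Real.rpow_le_rpow ht2.le hx.1 hχ
      have h2 : Real.exp (-1) ≤ Real.exp (-x ^ 2) := by
        refine Real.exp_le_exp.2 ?_
        nlinarith [hx.2]
      have h3 : (0:ℝ) ≤ (t/2) ^ χ := Real.rpow_nonneg ht2.le χ
      have h4 : (0:ℝ) < Real.exp (-1) := Real.exp_pos _
      have h6 : (t/2) ^ χ * Real.exp (-1) ≤ |x| ^ χ * Real.exp (-x ^ 2) :=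
        mul_le_mul h1 h2 h4.le (Real.rpow_nonneg (abs_nonneg x) χ)
      unfold dataDensity
      rw [← hΓ_def, div_le_div_iff₀ hΓ hΓ]
      nlinarith [mul_le_mul_of_nonneg_right h6 hΓ.le]
    · rw [hμ_def, withDensity_apply _ (hsetm' t)]
  -- G upper bound on (0,1]
  have hGup1 : ∀ t : ℝ, 0 < t → t ≤ 1 → G t ≤ ENNReal.ofReal (Real.exp (-(a * t ^ q))) := by
    intro t ht ht1
    rw [hGF t]
    refine le_trans (tsub_le_tsub_left (hFlo t ht ht1) 1) ?_
    exact one_sub_ofReal_le_exp (by positivity)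
  -- tail bound
  have hGtail : ∀ t : ℝ, 0 ≤ t → G t ≤ ENNReal.ofReal K * ENNReal.ofReal (Real.exp (-t)) := by
    intro t ht
    have hdb : ∀ x : ℝ, dataDensity χ x ≤ (K/2) * Real.exp (-|x|) := by
      intro x
      have hKhalf : K/2 = Real.exp ((χ + 1) ^ 2 / 4) / Γv := by rw [hK_def]; ring
      have h1 : |x| ^ χ ≤ Real.exp (χ * |x|) := by
        rcases eq_or_ne x 0 with rfl | hx
        · simp only [abs_zero, mul_zero, Real.exp_zero]
          exact Real.rpow_le_one le_rfl zero_le_one hχ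
        · have hax : 0 < |x| := abs_pos.2 hx
          rw [Real.rpow_def_of_pos hax]
          refine Real.exp_le_exp.2 ?_
          have hl := Real.log_le_self hax.le
          nlinarith
      have h2 : Real.exp (χ * |x|) * Real.exp (-x ^ 2)
          ≤ Real.exp ((χ + 1) ^ 2 / 4) * Real.exp (-|x|) := by
        rw [← Real.exp_add, ← Real.exp_add]
        refine Real.exp_le_exp.2 ?_
        nlinarith [sq_nonneg (|x| - (χ + 1)/2), sq_abs x]
      have h3 : (0:ℝ) ≤ Real.exp (-x ^ 2) := (Real.exp_pos _).le
      unfold dataDensity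
      rw [← hΓ_def, hKhalf, div_mul_eq_mul_div, div_le_div_iff₀ hΓ hΓ]
      have h5 := mul_le_mul_of_nonneg_right h1 h3
      nlinarith [mul_pos (Real.exp_pos ((χ+1)^2/4)) (Real.exp_pos (-|x|)), hΓ]
    have hmint : Measurable fun x : ℝ => ENNReal.ofReal ((K/2) * Real.exp (-|x|)) :=
      ((continuous_const.mul (Real.continuous_exp.comp continuous_abs.neg)).measurable).ennreal_ofReal
    have hGle : G t ≤ ∫⁻ x in Set.Iio (-t) ∪ Set.Ioi t,
        ENNReal.ofReal ((K/2) * Real.exp (-|x|)) := by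
      have hstep : G t ≤ ∫⁻ x in {x : ℝ | t < |x|},
          ENNReal.ofReal ((K/2) * Real.exp (-|x|)) := by
        rw [hG_def]
        simp only [hμ_def]
        rw [withDensity_apply _ (hsetm t)]
        exact setLIntegral_mono hmint fun x _ => ENNReal.ofReal_le_ofReal (hdb x)
      refine le_trans hstep (lintegral_mono_set ?_)
      intro x hx
      simp only [Set.mem_setOf_eq] at hx
      rcases lt_abs.1 hx with h | h
      · exact Or.inr h
      · exact Or.inl (by simpa [lt_neg] using h)
    have hIoi : ∫⁻ x in Set.Ioi t, ENNReal.ofReal ((K/2) * Real.exp (-|x|))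
        ≤ ENNReal.ofReal (K/2) * ENNReal.ofReal (Real.exp (-t)) := by
      have hcong : ∫⁻ x in Set.Ioi t, ENNReal.ofReal ((K/2) * Real.exp (-|x|))
          = ∫⁻ x in Set.Ioi t, ENNReal.ofReal (K/2) * ENNReal.ofReal (Real.exp (-(1 * x))) := by
        refine setLIntegral_congr_fun measurableSet_Ioi (fun x hx => ?_)
        rw [abs_of_pos (lt_of_le_of_lt ht hx), ENNReal.ofReal_mul (by positivity), one_mul]
      rw [hcong, lintegral_const_mul' _ _ ENNReal.ofReal_ne_top, lint_exp t one_pos]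
      simp only [one_mul, div_one, le_refl]
    have hIio : ∫⁻ x in Set.Iio (-t), ENNReal.ofReal ((K/2) * Real.exp (-|x|))
        ≤ ENNReal.ofReal (K/2) * ENNReal.ofReal (Real.exp (-t)) := by
      have hcong : ∫⁻ x in Set.Iio (-t), ENNReal.ofReal ((K/2) * Real.exp (-|x|))
          = ∫⁻ x in Set.Iio (-t), ENNReal.ofReal (K/2) * ENNReal.ofReal (Real.exp x) := by
        refine setLIntegral_congr_fun measurableSet_Iio (fun x hx => ?_)
        have hx0 : x < 0 := lt_of_lt_of_le hx (by linarith)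
        rw [abs_of_neg hx0, neg_neg, ENNReal.ofReal_mul (by positivity)]
      rw [hcong, lintegral_const_mul' _ _ ENNReal.ofReal_ne_top]
      refine mul_le_mul_right ?_ _
      calc ∫⁻ x in Set.Iio (-t), ENNReal.ofReal (Real.exp x)
          ≤ ∫⁻ x in Set.Iic (-t), ENNReal.ofReal (Real.exp x) :=
            lintegral_mono_set Set.Iio_subset_Iic_self
        _ = ENNReal.ofReal (Real.exp (-t)) := by
            rw [← ofReal_integral_eq_lintegral_ofReal (integrableOn_exp_Iic (-t))
              (Filter.Eventually.of_forall fun x => (Real.exp_pos x).le), integral_exp_Iic]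
    calc G t ≤ _ := hGle
      _ ≤ _ := lintegral_union_le _ _ _
      _ ≤ ENNReal.ofReal (K/2) * ENNReal.ofReal (Real.exp (-t))
          + ENNReal.ofReal (K/2) * ENNReal.ofReal (Real.exp (-t)) := add_le_add hIio hIoi
      _ = ENNReal.ofReal K * ENNReal.ofReal (Real.exp (-t)) := by
          rw [← add_mul, ← ENNReal.ofReal_add (by positivity) (by positivity)]
          norm_num
  -- main constants
  set c := Real.exp (-(2 * b)) with hc_def
  have hc : 0 < c := Real.exp_pos _
  set Cu := 2 * a ^ (-(1/q)) + K * Real.exp a / a with hCu_def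
  have hCu : 0 < Cu := by positivity
  refine ⟨c, Cu + c, hc, by linarith, ⌈2 * b⌉₊ + 2, by omega, ?_⟩
  intro P hP
  have hP1 : 1 ≤ P := by omega
  have hPpos : 0 < P := by omega
  have hPr : (0:ℝ) < P := by exact_mod_cast hPpos
  have hPr1 : (1:ℝ) ≤ P := by exact_mod_cast hP1
  have hbP : b / P ≤ 1/2 := by
    rw [div_le_iff₀ hPr]
    have h1 : (2:ℝ) * b ≤ ⌈2 * b⌉₊ := Nat.le_ceil _
    have h2 : ((⌈2 * b⌉₊ : ℕ) : ℝ) ≤ P := by exact_mod_cast le_trans (by omega) hP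
    linarith
  set r := (P : ℝ) ^ (-(1/q)) with hr_def
  have hr0 : 0 < r := Real.rpow_pos_of_pos hPr _
  have hrq : r ^ q = (P : ℝ)⁻¹ := by
    rw [hr_def, ← Real.rpow_mul hPr.le]
    rw [show -(1/q) * q = -1 by field_simp, Real.rpow_neg_one]
  have hrinv : (P : ℝ)⁻¹ ≤ r := by
    rw [hr_def, ← Real.rpow_neg_one]
    refine Real.rpow_le_rpow_of_exponent_le hPr1 ?_
    rw [neg_le_neg_iff]
    rw [div_le_one hq0]; exact hq1
  -- the minimum function
  set f : Ω → ℝ := fun ω => ⨅ i : Fin P, |X i ω| with hf_def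
  haveI : Nonempty (Fin P) := ⟨⟨0, hPpos⟩⟩
  have hfm : Measurable f :=
    Measurable.iInf (fun i => (hmeas i).abs)
  have hfnn : ∀ ω, 0 ≤ f ω := fun ω => le_ciInf (fun i => abs_nonneg _)
  -- product formula
  have hprod : ∀ t : ℝ, (ℙ : Measure Ω) {ω | t < f ω} = G t ^ P := by
    intro t
    have hseteq : {ω | t < f ω} = ⋂ i ∈ Finset.range P, X i ⁻¹' {x : ℝ | t < |x|} := by
      ext ω
      simp only [Set.mem_setOf_eq, hf_def, lt_iInf_iff' hPpos, Set.mem_iInter,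
        Set.mem_preimage, Finset.mem_range]
      exact ⟨fun h i hi => h ⟨i, hi⟩, fun h i => h i i.2⟩
    rw [hseteq, hindep.measure_inter_preimage_eq_mul (Finset.range P)
      (sets := fun _ => {x : ℝ | t < |x|}) (fun i _ => hsetm t)]
    have hGi : ∀ i, (ℙ : Measure Ω) (X i ⁻¹' {x : ℝ | t < |x|}) = G t := by
      intro i
      rw [← Measure.map_apply (hmeas i) (hsetm t), hlaw i]
    rw [Finset.prod_congr rfl (fun i _ => hGi i), Finset.prod_const, Finset.card_range]
  set J := ∫⁻ t in Set.Ioi (0:ℝ), G t ^ P with hJ_def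
  have hlayer : ∫⁻ ω, ENNReal.ofReal (f ω) ∂ℙ = J := by
    rw [lintegral_eq_lintegral_meas_lt ℙ (Filter.Eventually.of_forall hfnn) hfm.aemeasurable]
    exact lintegral_congr (fun t => hprod t)
  -- upper bound on J
  have hJup : J ≤ ENNReal.ofReal (Cu * r) := by
    have hsplit : J = (∫⁻ t in Set.Ioc (0:ℝ) 1, G t ^ P) + ∫⁻ t in Set.Ioi (1:ℝ), G t ^ P := by
      rw [hJ_def, ← Set.Ioc_union_Ioi_eq_Ioi (zero_le_one), lintegral_union measurableSet_Ioi
        (Set.Ioc_disjoint_Ioi le_rfl)]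
    have hA : (∫⁻ t in Set.Ioc (0:ℝ) 1, G t ^ P)
        ≤ ENNReal.ofReal (2 * a ^ (-(1/q)) * r) := by
      have h1 : ∀ t ∈ Set.Ioc (0:ℝ) 1, G t ^ P
          ≤ ENNReal.ofReal (Real.exp (-(a * P * t ^ q))) := by
        intro t ht
        calc G t ^ P ≤ (ENNReal.ofReal (Real.exp (-(a * t ^ q)))) ^ P :=
              pow_le_pow_left' (hGup1 t ht.1 ht.2) P
          _ = ENNReal.ofReal (Real.exp (-(a * t ^ q)) ^ P) :=
              (ENNReal.ofReal_pow (Real.exp_pos _).le P).symm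
          _ = ENNReal.ofReal (Real.exp (-(a * P * t ^ q))) := by
              rw [← Real.exp_nat_mul]
              congr 1
              ring
      calc (∫⁻ t in Set.Ioc (0:ℝ) 1, G t ^ P)
          ≤ ∫⁻ t in Set.Ioc (0:ℝ) 1, ENNReal.ofReal (Real.exp (-(a * P * t ^ q))) :=
            setLIntegral_mono ((Real.continuous_exp.comp ((continuous_const.mul
              (Real.continuous_rpow_const hq0.le)).neg)).measurable).ennreal_ofReal h1
        _ ≤ ∫⁻ t in Set.Ioi (0:ℝ), ENNReal.ofReal (Real.exp (-(a * P * t ^ q))) :=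
            lintegral_mono_set Set.Ioc_subset_Ioi_self
        _ ≤ ENNReal.ofReal (2 * (a * P) ^ (-(1/q))) := lint_exp_rpow (by positivity) hq1
        _ = ENNReal.ofReal (2 * a ^ (-(1/q)) * r) := by
            congr 1
            rw [Real.mul_rpow ha.le hPr.le, hr_def]
            ring
    have hB : (∫⁻ t in Set.Ioi (1:ℝ), G t ^ P)
        ≤ ENNReal.ofReal (K * Real.exp a / a * r) := by
      have hG1 : G 1 ≤ ENNReal.ofReal (Real.exp (-a)) := by
        have h0 := hGup1 1 one_pos le_rfl
        rw [Real.one_rpow, mul_one] at h0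
        exact h0
      have h1 : ∀ t ∈ Set.Ioi (1:ℝ), G t ^ P ≤
          (ENNReal.ofReal (Real.exp (-a))) ^ (P-1)
            * (ENNReal.ofReal K * ENNReal.ofReal (Real.exp (-t))) := by
        intro t ht
        have ht1 : (1:ℝ) < t := ht
        have hGt1 : G t ≤ ENNReal.ofReal (Real.exp (-a)) := le_trans (hGanti ht1.le) hG1
        calc G t ^ P = G t ^ (P-1) * G t := by
              rw [← pow_succ]
              congr 1
              omega
          _ ≤ (ENNReal.ofReal (Real.exp (-a))) ^ (P-1)
              * (ENNReal.ofReal K * ENNReal.ofReal (Real.exp (-t))) :=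
            mul_le_mul' (pow_le_pow_left' hGt1 _) (hGtail t (by linarith))
      have hmB : Measurable fun t : ℝ => (ENNReal.ofReal (Real.exp (-a))) ^ (P-1)
          * (ENNReal.ofReal K * ENNReal.ofReal (Real.exp (-t))) := by
        refine measurable_const.fun_mul (measurable_const.fun_mul ?_)
        exact ((Real.continuous_exp.comp continuous_neg).measurable).ennreal_ofReal
      have hint1 : ∫⁻ t in Set.Ioi (1:ℝ), ENNReal.ofReal (Real.exp (-t))
          = ENNReal.ofReal (Real.exp (-1)) := by
        have := lint_exp (1:ℝ) one_pos
        simpa using this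
      calc (∫⁻ t in Set.Ioi (1:ℝ), G t ^ P)
          ≤ ∫⁻ t in Set.Ioi (1:ℝ), (ENNReal.ofReal (Real.exp (-a))) ^ (P-1)
              * (ENNReal.ofReal K * ENNReal.ofReal (Real.exp (-t))) :=
            setLIntegral_mono hmB h1
        _ = (ENNReal.ofReal (Real.exp (-a))) ^ (P-1) * (ENNReal.ofReal K
              * ∫⁻ t in Set.Ioi (1:ℝ), ENNReal.ofReal (Real.exp (-t))) := by
            rw [lintegral_const_mul' _ _ (ENNReal.pow_ne_top ENNReal.ofReal_ne_top),
              lintegral_const_mul' _ _ ENNReal.ofReal_ne_top]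
        _ ≤ ENNReal.ofReal (K * Real.exp a / a * r) := by
            rw [hint1, ← ENNReal.ofReal_pow (Real.exp_pos _).le,
              ← ENNReal.ofReal_mul (by positivity), ← ENNReal.ofReal_mul (by positivity)]
            refine ENNReal.ofReal_le_ofReal ?_
            have e0 : Real.exp (-a) ^ (P-1) = Real.exp (((P:ℝ) - 1) * (-a)) := by
              rw [← Real.exp_nat_mul, Nat.cast_sub hP1, Nat.cast_one]
            have e2 : Real.exp (-((P:ℝ) * a)) ≤ a⁻¹ * r := by
              have e3 : Real.exp (-((P:ℝ) * a)) ≤ ((P:ℝ) * a)⁻¹ := by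
                rw [Real.exp_neg]
                exact inv_anti₀ (by positivity) (by nlinarith [Real.add_one_le_exp ((P:ℝ) * a)])
              refine le_trans e3 ?_
              rw [mul_inv, mul_comm]
              exact mul_le_mul_of_nonneg_left hrinv (inv_nonneg.2 ha.le)
            have e1 : Real.exp (-a) ^ (P-1) ≤ Real.exp a * (a⁻¹ * r) := by
              rw [e0, show ((P:ℝ) - 1) * (-a) = a + -((P:ℝ) * a) by ring, Real.exp_add]
              exact mul_le_mul_of_nonneg_left e2 (Real.exp_pos a).le
            have e4 : K * Real.exp (-1) ≤ K * 1 :=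
              mul_le_mul_of_nonneg_left (Real.exp_le_one_iff.2 (by norm_num)) hK.le
            calc Real.exp (-a) ^ (P-1) * (K * Real.exp (-1))
                ≤ (Real.exp a * (a⁻¹ * r)) * (K * 1) := by
                  refine mul_le_mul e1 e4 (by positivity) (by positivity)
              _ = K * Real.exp a / a * r := by
                  field_simp
    calc J = _ := hsplit
      _ ≤ ENNReal.ofReal (2 * a ^ (-(1/q)) * r) + ENNReal.ofReal (K * Real.exp a / a * r) :=
          add_le_add hA hB
      _ = ENNReal.ofReal (Cu * r) := by
          rw [← ENNReal.ofReal_add (by positivity) (by positivity), hCu_def]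
          congr 1
          ring
  -- lower bound on J
  have hJlo : ENNReal.ofReal (c * r) ≤ J := by
    have hpt : ∀ t ∈ Set.Ioc (0:ℝ) r, ENNReal.ofReal c ≤ G t ^ P := by
      intro t ht
      have hFt : μ {x : ℝ | |x| ≤ t} ≤ ENNReal.ofReal (b / P) := by
        refine le_trans (hFup t ht.1) (ENNReal.ofReal_le_ofReal ?_)
        have h1 : t ^ q ≤ r ^ q := Real.rpow_le_rpow ht.1.le ht.2 hq0.le
        rw [hrq] at h1
        calc b * t ^ q ≤ b * (P:ℝ)⁻¹ := mul_le_mul_of_nonneg_left h1 hb.le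
          _ = b / P := by rw [div_eq_mul_inv]
      have hGt : ENNReal.ofReal (1 - b / P) ≤ G t := by
        rw [hGF t]
        exact le_trans (ofReal_one_sub_le_sub (by positivity) (by linarith))
          (tsub_le_tsub_left hFt 1)
      have hbP0 : (0:ℝ) ≤ 1 - b / P := by linarith
      calc ENNReal.ofReal c ≤ ENNReal.ofReal ((1 - b/P) ^ P) := by
            refine ENNReal.ofReal_le_ofReal ?_
            have h2 : Real.exp (-(2 * (b/P))) ≤ 1 - b/P :=
              exp_neg_two_le_one_sub (by positivity) hbP
            have h3 := pow_le_pow_left₀ (Real.exp_pos _).le h2 P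
            refine le_trans (le_of_eq ?_) h3
            rw [← Real.exp_nat_mul]
            rw [hc_def]
            congr 1
            field_simp
        _ = ENNReal.ofReal (1 - b/P) ^ P := ENNReal.ofReal_pow hbP0 P
        _ ≤ G t ^ P := pow_le_pow_left' hGt P
    calc ENNReal.ofReal (c * r) = ENNReal.ofReal c * volume (Set.Ioc (0:ℝ) r) := by
          rw [Real.volume_Ioc, sub_zero, ← ENNReal.ofReal_mul hc.le]
      _ = ∫⁻ _ in Set.Ioc (0:ℝ) r, ENNReal.ofReal c := (setLIntegral_const _ _).symm
      _ ≤ ∫⁻ t in Set.Ioc (0:ℝ) r, G t ^ P := setLIntegral_mono (hGanti.measurable.pow_const P) hpt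
      _ ≤ J := lintegral_mono_set Set.Ioc_subset_Ioi_self
  -- finish
  have hint_eq : (∫ ω, f ω ∂ℙ) = J.toReal := by
    rw [integral_eq_lintegral_of_nonneg_ae (Filter.Eventually.of_forall hfnn)
      hfm.aestronglyMeasurable, hlayer]
  have hJtop : J ≠ ⊤ := (lt_of_le_of_lt hJup ENNReal.ofReal_lt_top).ne
  constructor
  · rw [hint_eq]
    have := (ENNReal.ofReal_le_iff_le_toReal hJtop).1 hJlo
    linarith
  · rw [hint_eq]
    have h1 : J.toReal ≤ Cu * r := ENNReal.toReal_le_of_le_ofReal (by positivity) hJup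
    nlinarith [hc.le, hr0.le]
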